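/- In the Gaussian simple mediation model with n ≥ 5, Var(γ̂ | x) = θ_x² (σ_u²/σ_v²)/(n-4) + β_m² σ_v²/(x'x) + (σ_u²/(x'x))/(n-4). -/

import Mathlib

set_option maxHeartbeats 1000000


open MeasureTheory ProbabilityTheory Real Filter Set
open scoped NNReal ENNReal

/-- Density of the Student t distribution with `ν` degrees of freedom. -/
noncomputable def tPdf (ν t : ℝ) : ℝ :=
  Real.Gamma ((ν + 1) / 2) / (Real.sqrt (π * ν) * Real.Gamma (ν / 2)) *
    (1 + t ^ 2 / ν) ^ (-(ν + 1) / 2)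

/-- Standard Student t distribution with `ν` degrees of freedom. -/
noncomputable def tMeasure (ν : ℝ) : Measure ℝ :=
  volume.withDensity (fun t => ENNReal.ofReal (tPdf ν t))

lemma integral_deriv_eq_zero' {h h' : ℝ → ℝ} (hd : ∀ x, HasDerivAt h (h' x) x)
    (hi : Integrable h') (htop : Tendsto h atTop (nhds 0)) (hbot : Tendsto h atBot (nhds 0)) :
    ∫ x, h' x = 0 := by
  have h1 : ∫ x in Ioi (0:ℝ), h' x = 0 - h 0 :=
    integral_Ioi_of_hasDerivAt_of_tendsto (hd 0).continuousAt.continuousWithinAt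
      (fun x _ => hd x) hi.integrableOn htop
  have h2 : ∫ x in Iic (0:ℝ), h' x = h 0 - 0 :=
    integral_Iic_of_hasDerivAt_of_tendsto (hd 0).continuousAt.continuousWithinAt
      (fun x _ => hd x) hi.integrableOn hbot
  rw [← intervalIntegral.integral_Iic_add_Ioi hi.integrableOn hi.integrableOn, h1, h2]
  ring

lemma t_pow_integrable {ν : ℝ} (hν : 1 ≤ ν) (k : ℕ) {p : ℝ} (hp : (k:ℝ) + 1 < 2 * p) :
    Integrable fun t : ℝ => |t| ^ k * (1 + t ^ 2 / ν) ^ (-p) := by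
  have hν0 : (0:ℝ) < ν := lt_of_lt_of_le one_pos hν
  have hbase : ∀ t : ℝ, 0 < 1 + t ^ 2 / ν := fun t => by positivity
  set r : ℝ := 2 * p - k with hr
  have hr1 : 1 < r := by rw [hr]; linarith
  have hint : Integrable fun x : ℝ => ν ^ p * (1 + x ^ 2) ^ (-r / 2) := by
    have := (integrable_rpow_neg_one_add_norm_sq (E := ℝ) (μ := volume)
      (by simpa using hr1)).const_mul (ν ^ p)
    simpa [Real.norm_eq_abs, sq_abs] using this
  refine hint.mono' ?_ (ae_of_all _ fun t => ?_)
  · apply Continuous.aestronglyMeasurable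
    exact (continuous_abs.pow k).mul (Continuous.rpow_const (by continuity)
      (fun t => Or.inl (hbase t).ne'))
  · rw [Real.norm_eq_abs, abs_of_nonneg (by positivity)]
    have e1 : ν * (1 + t ^ 2 / ν) = ν + t ^ 2 := by field_simp
    have h1 : |t| ^ k ≤ (ν * (1 + t ^ 2 / ν)) ^ ((k : ℝ) / 2) := by
      have h2 : |t| ≤ Real.sqrt (ν + t ^ 2) := by
        rw [← Real.sqrt_sq_eq_abs]
        exact Real.sqrt_le_sqrt (by linarith)
      have h3 : Real.sqrt (ν + t ^ 2) ^ k = (ν + t ^ 2) ^ ((k:ℝ) / 2) := by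
        rw [← Real.rpow_natCast (Real.sqrt _) k, Real.sqrt_eq_rpow,
          ← Real.rpow_mul (by positivity)]
        congr 1; ring
      calc |t| ^ k ≤ Real.sqrt (ν + t ^ 2) ^ k := pow_le_pow_left₀ (abs_nonneg t) h2 k
        _ = (ν * (1 + t ^ 2 / ν)) ^ ((k : ℝ) / 2) := by rw [h3, e1]
    have hstep : ((1 + t ^ 2) / ν) ^ (-(r/2)) = (1 + t ^ 2) ^ (-(r/2)) * ν ^ (r/2) := by
      rw [Real.div_rpow (by positivity) hν0.le, div_eq_mul_inv, ← Real.rpow_neg hν0.le, neg_neg]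
    calc |t| ^ k * (1 + t ^ 2 / ν) ^ (-p)
        ≤ (ν * (1 + t ^ 2 / ν)) ^ ((k : ℝ) / 2) * (1 + t ^ 2 / ν) ^ (-p) :=
          mul_le_mul_of_nonneg_right h1 (Real.rpow_nonneg (hbase t).le _)
      _ = ν ^ ((k : ℝ) / 2) * (1 + t ^ 2 / ν) ^ (-(r / 2)) := by
          rw [Real.mul_rpow hν0.le (hbase t).le, mul_assoc,
            ← Real.rpow_add (hbase t)]
          congr 2
          rw [hr]; push_cast; ring
      _ ≤ ν ^ ((k : ℝ) / 2) * ((1 + t ^ 2) / ν) ^ (-(r / 2)) := by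
          refine mul_le_mul_of_nonneg_left ?_ (Real.rpow_nonneg hν0.le _)
          apply Real.rpow_le_rpow_of_nonpos (by positivity) _ (by linarith)
          rw [div_le_iff₀ hν0]
          nlinarith [sq_nonneg t]
      _ = ν ^ p * (1 + t ^ 2) ^ (-r / 2) := by
          rw [hstep, neg_div,
            show ν ^ ((k:ℝ)/2) * ((1 + t^2) ^ (-(r/2)) * ν ^ (r/2))
              = ν ^ ((k:ℝ)/2) * ν ^ (r/2) * (1 + t^2) ^ (-(r/2)) from by ring,
            ← Real.rpow_add hν0,
            show (k:ℝ)/2 + r/2 = p from by rw [hr]; push_cast; ring]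

lemma t_deriv_aux {ν : ℝ} (hν : 2 < ν) (t : ℝ) :
    HasDerivAt (fun t : ℝ => t * (1 + t ^ 2 / ν) ^ (-((ν - 1) / 2)))
      ((1 + t ^ 2 / ν) ^ (-((ν - 1) / 2))
        - (ν - 1) / ν * (t ^ 2 * (1 + t ^ 2 / ν) ^ (-((ν + 1) / 2)))) t := by
  have hν0 : (0:ℝ) < ν := by linarith
  have hbase : (0:ℝ) < 1 + t ^ 2 / ν := by positivity
  have hb : HasDerivAt (fun t : ℝ => 1 + t ^ 2 / ν) (2 * t / ν) t := by
    have := ((hasDerivAt_pow 2 t).div_const ν).const_add 1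
    simpa using this
  have hg : HasDerivAt (fun t : ℝ => (1 + t ^ 2 / ν) ^ (-((ν - 1) / 2)))
      (2 * t / ν * (-((ν - 1) / 2)) * (1 + t ^ 2 / ν) ^ (-((ν - 1) / 2) - 1)) t :=
    hb.rpow_const (Or.inl hbase.ne')
  have := (hasDerivAt_id t).mul hg
  refine this.congr_deriv ?_
  have he : (1 + t ^ 2 / ν) ^ (-((ν - 1) / 2) - 1) = (1 + t ^ 2 / ν) ^ (-((ν + 1) / 2)) := by
    congr 1; ring
  rw [he]
  simp only [id_eq]
  ring

lemma t_tendsto_aux {ν : ℝ} (hν : 2 < ν) :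
    Tendsto (fun t : ℝ => t * (1 + t ^ 2 / ν) ^ (-((ν - 1) / 2))) atTop (nhds 0)
    ∧ Tendsto (fun t : ℝ => t * (1 + t ^ 2 / ν) ^ (-((ν - 1) / 2))) atBot (nhds 0) := by
  have hν0 : (0:ℝ) < ν := by linarith
  have hbase : ∀ t : ℝ, (0:ℝ) < 1 + t ^ 2 / ν := fun t => by positivity
  have hbnd : ∀ t : ℝ, ‖t * (1 + t ^ 2 / ν) ^ (-((ν - 1) / 2))‖
      ≤ Real.sqrt ν * (1 + t ^ 2 / ν) ^ (-((ν - 2) / 2)) := by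
    intro t
    rw [Real.norm_eq_abs, abs_mul, abs_of_nonneg (Real.rpow_nonneg (hbase t).le _)]
    have h2 : |t| ≤ Real.sqrt ν * (1 + t ^ 2 / ν) ^ ((1:ℝ)/2) := by
      rw [← Real.sqrt_eq_rpow, ← Real.sqrt_mul hν0.le, ← Real.sqrt_sq_eq_abs]
      apply Real.sqrt_le_sqrt
      rw [mul_add, mul_div_cancel₀ _ (ne_of_gt hν0)]
      linarith
    calc |t| * (1 + t ^ 2 / ν) ^ (-((ν - 1) / 2))
        ≤ Real.sqrt ν * (1 + t ^ 2 / ν) ^ ((1:ℝ)/2) * (1 + t ^ 2 / ν) ^ (-((ν - 1) / 2)) :=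
          mul_le_mul_of_nonneg_right h2 (Real.rpow_nonneg (hbase t).le _)
      _ = Real.sqrt ν * (1 + t ^ 2 / ν) ^ (-((ν - 2) / 2)) := by
          rw [mul_assoc, ← Real.rpow_add (hbase t)]
          congr 2; ring
  have htopB : Tendsto (fun t : ℝ => 1 + t ^ 2 / ν) atTop atTop :=
    tendsto_atTop_add_const_left _ 1 ((tendsto_pow_atTop two_ne_zero).atTop_div_const hν0)
  have hbotB : Tendsto (fun t : ℝ => 1 + t ^ 2 / ν) atBot atTop := by
    apply tendsto_atTop_add_const_left _ 1
    apply Tendsto.atTop_div_const hν0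
    have := (tendsto_pow_atTop (two_ne_zero)).comp (tendsto_neg_atBot_atTop : Tendsto (Neg.neg : ℝ → ℝ) atBot atTop)
    simpa [Function.comp_def, neg_sq] using this
  have hr0 : (0:ℝ) < (ν - 2) / 2 := by linarith
  have hB : ∀ l : Filter ℝ, Tendsto (fun t : ℝ => 1 + t ^ 2 / ν) l atTop →
      Tendsto (fun t : ℝ => Real.sqrt ν * (1 + t ^ 2 / ν) ^ (-((ν - 2) / 2))) l (nhds 0) := by
    intro l hl
    have := ((tendsto_rpow_neg_atTop hr0).comp hl).const_mul (Real.sqrt ν)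
    simpa [Function.comp_def] using this
  exact ⟨squeeze_zero_norm hbnd (hB _ htopB), squeeze_zero_norm hbnd (hB _ hbotB)⟩

lemma t_sq_moment {ν : ℝ} (hν : 2 < ν) :
    (ν - 2) * ∫ t : ℝ, t ^ 2 * (1 + t ^ 2 / ν) ^ (-((ν + 1) / 2))
      = ν * ∫ t : ℝ, (1 + t ^ 2 / ν) ^ (-((ν + 1) / 2)) := by
  have hν0 : (0:ℝ) < ν := by linarith
  have hν1 : (1:ℝ) ≤ ν := by linarith
  have hbase : ∀ t : ℝ, (0:ℝ) < 1 + t ^ 2 / ν := fun t => by positivity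
  have If : Integrable fun t : ℝ => (1 + t ^ 2 / ν) ^ (-((ν + 1) / 2)) := by
    have := t_pow_integrable hν1 0 (p := (ν + 1) / 2) (by push_cast; linarith)
    simpa using this
  have I2 : Integrable fun t : ℝ => t ^ 2 * (1 + t ^ 2 / ν) ^ (-((ν + 1) / 2)) := by
    have := t_pow_integrable hν1 2 (p := (ν + 1) / 2) (by push_cast; linarith)
    simpa [sq_abs] using this
  have Ig : Integrable fun t : ℝ => (1 + t ^ 2 / ν) ^ (-((ν - 1) / 2)) := by
    have := t_pow_integrable hν1 0 (p := (ν - 1) / 2) (by push_cast; linarith)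
    simpa using this
  have hzero : ∫ t : ℝ, ((1 + t ^ 2 / ν) ^ (-((ν - 1) / 2))
      - (ν - 1) / ν * (t ^ 2 * (1 + t ^ 2 / ν) ^ (-((ν + 1) / 2)))) = 0 :=
    integral_deriv_eq_zero' (t_deriv_aux hν) (Ig.sub (I2.const_mul _))
      (t_tendsto_aux hν).1 (t_tendsto_aux hν).2
  rw [integral_sub Ig (I2.const_mul _), integral_const_mul, sub_eq_zero] at hzero
  have hsplit : (fun t : ℝ => (1 + t ^ 2 / ν) ^ (-((ν - 1) / 2)))
      = fun t : ℝ => (1 + t ^ 2 / ν) ^ (-((ν + 1) / 2))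
        + (1 / ν) * (t ^ 2 * (1 + t ^ 2 / ν) ^ (-((ν + 1) / 2))) := by
    funext t
    have : (1 + t ^ 2 / ν) ^ (-((ν - 1) / 2))
        = (1 + t ^ 2 / ν) ^ (-((ν + 1) / 2)) * (1 + t ^ 2 / ν) ^ (1:ℝ) := by
      rw [← Real.rpow_add (hbase t)]; congr 1; ring
    rw [this, Real.rpow_one]
    field_simp
  rw [hsplit, integral_add If (I2.const_mul _), integral_const_mul] at hzero
  set F := ∫ t : ℝ, (1 + t ^ 2 / ν) ^ (-((ν + 1) / 2)) with hF
  set A := ∫ t : ℝ, t ^ 2 * (1 + t ^ 2 / ν) ^ (-((ν + 1) / 2)) with hAdef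
  have h' : ν * (F + 1 / ν * A) = ν * ((ν - 1) / ν * A) := by rw [hzero]
  field_simp at h'
  linarith

lemma integral_ofReal_withDensity {ρ : ℝ → ℝ} (hm : Measurable ρ) (hρ : ∀ x, 0 ≤ ρ x)
    (g : ℝ → ℝ) :
    ∫ x, g x ∂(volume.withDensity (fun x => ENNReal.ofReal (ρ x))) = ∫ x, ρ x * g x := by
  have he : (fun x => ENNReal.ofReal (ρ x)) = fun x => (((ρ x).toNNReal : ℝ≥0) : ℝ≥0∞) := rfl
  rw [he, integral_withDensity_eq_integral_smul (hm.real_toNNReal)]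
  congr 1; funext x
  simp [NNReal.smul_def, Real.coe_toNNReal _ (hρ x)]

lemma integrable_ofReal_withDensity {ρ : ℝ → ℝ} (hm : Measurable ρ) (hρ : ∀ x, 0 ≤ ρ x)
    (g : ℝ → ℝ) :
    Integrable g (volume.withDensity (fun x => ENNReal.ofReal (ρ x)))
      ↔ Integrable (fun x => ρ x * g x) volume := by
  have he : (fun x => ENNReal.ofReal (ρ x)) = fun x => (((ρ x).toNNReal : ℝ≥0) : ℝ≥0∞) := rfl
  rw [he, integrable_withDensity_iff_integrable_smul (hm.real_toNNReal)]
  constructor <;> intro h <;> refine h.congr (ae_of_all _ fun x => ?_) <;>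
    simp [NNReal.smul_def, Real.coe_toNNReal _ (hρ x)]

lemma integral_odd_zero (f : ℝ → ℝ) (hf : ∀ x, f (-x) = - f x) : ∫ x, f x = 0 := by
  have h1 : ∫ x : ℝ, f (-x) = ∫ x : ℝ, f x := integral_neg_eq_self f volume
  have h2 : ∫ x : ℝ, f (-x) = - ∫ x : ℝ, f x := by
    simp only [hf]; exact integral_neg f
  linarith

lemma gauss_pow_integrable {V : ℝ} (hV : 0 < V) (k : ℕ) :
    Integrable fun x : ℝ => x ^ k * Real.exp (-x ^ 2 / (2 * V)) := by
  have hb : (0:ℝ) < (2 * V)⁻¹ := by positivity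
  have := integrable_rpow_mul_exp_neg_mul_sq hb (s := (k : ℝ)) (by exact lt_of_lt_of_le (by norm_num) (Nat.cast_nonneg k))
  refine this.congr (ae_of_all _ fun x => ?_)
  simp only [Real.rpow_natCast]
  congr 2
  field_simp

lemma gauss_tendsto_aux {V : ℝ} (hV : 0 < V) :
    Tendsto (fun x : ℝ => x * Real.exp (-x ^ 2 / (2 * V))) atTop (nhds 0)
    ∧ Tendsto (fun x : ℝ => x * Real.exp (-x ^ 2 / (2 * V))) atBot (nhds 0) := by
  have hb : (0:ℝ) < (2 * V)⁻¹ := by positivity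
  have hform : ∀ x : ℝ, Real.exp (-(2 * V)⁻¹ * x ^ 2) = Real.exp (-x ^ 2 / (2 * V)) := by
    intro x; congr 1; field_simp
  have h1 := rpow_mul_exp_neg_mul_sq_isLittleO_exp_neg hb 1
  have h2 : Tendsto (fun x : ℝ => Real.exp (-(1 / 2) * x)) atTop (nhds 0) := by
    have h3 : Tendsto (fun x : ℝ => -(1 / 2) * x) atTop atBot :=
      Tendsto.const_mul_atTop_of_neg (by norm_num : (-(1/2) : ℝ) < 0) tendsto_id
    exact Real.tendsto_exp_atBot.comp h3
  have htop : Tendsto (fun x : ℝ => x * Real.exp (-x ^ 2 / (2 * V))) atTop (nhds 0) := by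
    have := (h1.isBigO.trans_tendsto h2)
    refine this.congr' (by
      filter_upwards [eventually_ge_atTop (0:ℝ)] with x _
      rw [Real.rpow_one, hform])
  constructor
  · exact htop
  · have := htop.comp (tendsto_neg_atBot_atTop : Tendsto (Neg.neg : ℝ → ℝ) atBot atTop)
    have heq : (fun x : ℝ => (-x) * Real.exp (-(-x) ^ 2 / (2 * V)))
        = fun x : ℝ => -(x * Real.exp (-x ^ 2 / (2 * V))) := by
      funext x; rw [neg_sq]; ring
    rw [show ((fun x : ℝ => x * Real.exp (-x ^ 2 / (2 * V))) ∘ Neg.neg)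
        = fun x : ℝ => (-x) * Real.exp (-(-x) ^ 2 / (2 * V)) from rfl, heq] at this
    simpa using this.neg

lemma gauss_deriv_aux {V : ℝ} (hV : 0 < V) (x : ℝ) :
    HasDerivAt (fun x : ℝ => x * Real.exp (-x ^ 2 / (2 * V)))
      (Real.exp (-x ^ 2 / (2 * V)) - (1 / V) * (x ^ 2 * Real.exp (-x ^ 2 / (2 * V)))) x := by
  have hinner : HasDerivAt (fun x : ℝ => -x ^ 2 / (2 * V)) (-(2 * x ^ (2-1)) / (2 * V)) x :=
    (hasDerivAt_pow 2 x).neg.div_const (2 * V)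
  have hexp := hinner.exp
  have := (hasDerivAt_id x).mul hexp
  refine this.congr_deriv ?_
  simp only [id_eq, pow_one]
  field_simp
  ring

lemma gauss_sq_moment {V : ℝ} (hV : 0 < V) :
    ∫ x : ℝ, x ^ 2 * Real.exp (-x ^ 2 / (2 * V))
      = V * ∫ x : ℝ, Real.exp (-x ^ 2 / (2 * V)) := by
  have h0 := gauss_pow_integrable hV 0
  simp only [pow_zero, one_mul] at h0
  have h2 := gauss_pow_integrable hV 2
  have hzero : ∫ x : ℝ, (Real.exp (-x ^ 2 / (2 * V))
        - (1 / V) * (x ^ 2 * Real.exp (-x ^ 2 / (2 * V)))) = 0 :=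
    integral_deriv_eq_zero' (gauss_deriv_aux hV) (h0.sub (h2.const_mul _))
      (gauss_tendsto_aux hV).1 (gauss_tendsto_aux hV).2
  rw [integral_sub h0 (h2.const_mul _), integral_const_mul, sub_eq_zero] at hzero
  rw [hzero]
  field_simp

lemma gaussian_moments {m : ℝ} {v : ℝ≥0} (hv : v ≠ 0) :
    Integrable (fun x => x) (gaussianReal m v) ∧
    Integrable (fun x => x ^ 2) (gaussianReal m v) ∧
    (∫ x, x ∂(gaussianReal m v)) = m ∧
    (∫ x, x ^ 2 ∂(gaussianReal m v)) = m ^ 2 + (v : ℝ) := by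
  have hV : (0:ℝ) < (v : ℝ) := by exact_mod_cast pos_iff_ne_zero.mpr hv
  set c : ℝ := (Real.sqrt (2 * π * v))⁻¹ with hc
  set ψ : ℝ → ℝ := fun x => Real.exp (-x ^ 2 / (2 * (v:ℝ))) with hψ
  set ρ : ℝ → ℝ := gaussianPDFReal m v with hρdef
  have hrm : Measurable ρ := measurable_gaussianPDFReal m v
  have hrn : ∀ x, 0 ≤ ρ x := gaussianPDFReal_nonneg m v
  have hg : gaussianReal m v = volume.withDensity fun x => ENNReal.ofReal (ρ x) :=
    gaussianReal_of_var_ne_zero m hv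
  have hshift : ∀ x : ℝ, ρ (x + m) = c * ψ x := by
    intro x
    simp only [ρ, gaussianPDFReal, add_sub_cancel_right, hc, hψ]
  have Iψ : Integrable ψ := by simpa using gauss_pow_integrable hV 0
  have Ixψ : Integrable (fun x => x * ψ x) := by simpa using gauss_pow_integrable hV 1
  have Ix2ψ : Integrable (fun x => x ^ 2 * ψ x) := gauss_pow_integrable hV 2
  have hodd : ∫ x : ℝ, x * ψ x = 0 := by
    refine integral_odd_zero _ fun x => ?_
    simp only [hψ, neg_sq]
    ring
  have hnorm : ∫ x : ℝ, ρ x = 1 := integral_gaussianPDFReal_eq_one m hv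
  have hshift_int : ∀ g : ℝ → ℝ, (∫ x : ℝ, g (x + m)) = ∫ x : ℝ, g x := fun g =>
    integral_add_right_eq_self g m
  have hcψ : c * ∫ x : ℝ, ψ x = 1 := by
    have h1 : ∫ x : ℝ, ρ (x + m) = 1 := by rw [hshift_int ρ]; exact hnorm
    rw [← h1]
    simp only [hshift]
    rw [integral_const_mul]
  have Ib1 : Integrable (fun x : ℝ => c * (x * ψ x) + m * c * ψ x) :=
    (Ixψ.const_mul c).add (Iψ.const_mul (m * c))
  have Ib2 : Integrable (fun x : ℝ => c * (x ^ 2 * ψ x) + 2 * m * c * (x * ψ x)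
      + m ^ 2 * c * ψ x) :=
    ((Ix2ψ.const_mul c).add (Ixψ.const_mul (2 * m * c))).add (Iψ.const_mul (m ^ 2 * c))
  have hmom1 : ∫ x : ℝ, ρ x * x = m := by
    rw [← hshift_int (fun x => ρ x * x)]
    have he : (fun x : ℝ => ρ (x + m) * (x + m))
        = fun x : ℝ => c * (x * ψ x) + m * c * ψ x := by
      funext x; rw [hshift]; ring
    rw [he, integral_add ((Ixψ.const_mul c)) ((Iψ.const_mul (m * c))),
      integral_const_mul, integral_const_mul, hodd, mul_zero, zero_add, mul_assoc, hcψ, mul_one]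
  have hmom2 : ∫ x : ℝ, ρ x * x ^ 2 = m ^ 2 + (v : ℝ) := by
    rw [← hshift_int (fun x => ρ x * x ^ 2)]
    have he : (fun x : ℝ => ρ (x + m) * (x + m) ^ 2)
        = fun x : ℝ => (c * (x ^ 2 * ψ x) + 2 * m * c * (x * ψ x)) + m ^ 2 * c * ψ x := by
      funext x; rw [hshift]; ring
    have If1 : Integrable (fun x : ℝ => c * (x ^ 2 * ψ x) + 2 * m * c * (x * ψ x)) :=
      (Ix2ψ.const_mul c).add (Ixψ.const_mul (2 * m * c))
    rw [he, integral_add If1 (Iψ.const_mul (m ^ 2 * c)),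
      integral_add ((Ix2ψ.const_mul c)) ((Ixψ.const_mul (2 * m * c))),
      integral_const_mul, integral_const_mul, integral_const_mul, hodd, mul_zero, add_zero,
      gauss_sq_moment hV]
    have h2 : c * ((v:ℝ) * ∫ x : ℝ, ψ x) = (v : ℝ) := by
      rw [← mul_assoc, mul_comm c, mul_assoc, hcψ, mul_one]
    rw [h2, mul_assoc, hcψ, mul_one]
    ring
  have hρx : ∀ x : ℝ, ρ x = c * ψ (x - m) := by
    intro x
    rw [← hshift (x - m), sub_add_cancel]
  have hI1 : Integrable (fun x => x) (gaussianReal m v) := by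
    rw [hg, integrable_ofReal_withDensity hrm hrn]
    refine (Ib1.comp_sub_right m).congr (ae_of_all _ fun x => ?_)
    show c * ((x - m) * ψ (x - m)) + m * c * ψ (x - m) = ρ x * x
    rw [hρx x]; ring
  have hI2 : Integrable (fun x => x ^ 2) (gaussianReal m v) := by
    rw [hg, integrable_ofReal_withDensity hrm hrn]
    refine (Ib2.comp_sub_right m).congr (ae_of_all _ fun x => ?_)
    show c * ((x - m) ^ 2 * ψ (x - m)) + 2 * m * c * ((x - m) * ψ (x - m))
        + m ^ 2 * c * ψ (x - m) = ρ x * x ^ 2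
    rw [hρx x]; ring
  refine ⟨hI1, hI2, ?_, ?_⟩
  · rw [hg, integral_ofReal_withDensity hrm hrn]; exact hmom1
  · rw [hg, integral_ofReal_withDensity hrm hrn]; exact hmom2

lemma tPdf_eq {ν : ℝ} (t : ℝ) :
    tPdf ν t = Real.Gamma ((ν + 1) / 2) / (Real.sqrt (π * ν) * Real.Gamma (ν / 2))
      * (1 + t ^ 2 / ν) ^ (-((ν + 1) / 2)) := by
  rw [tPdf, neg_div]

lemma tMeasure_props {ν : ℝ} (hν : 2 < ν) (hnorm : ∫ t : ℝ, tPdf ν t = 1) :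
    Integrable (fun x => x) (tMeasure ν) ∧
    Integrable (fun x => x ^ 2) (tMeasure ν) ∧
    (∫ x, x ∂(tMeasure ν)) = 0 ∧
    (∫ x, x ^ 2 ∂(tMeasure ν)) = ν / (ν - 2) := by
  have hν0 : (0:ℝ) < ν := by linarith
  have hν1 : (1:ℝ) ≤ ν := by linarith
  have hbase : ∀ t : ℝ, (0:ℝ) < 1 + t ^ 2 / ν := fun t => by positivity
  set C : ℝ := Real.Gamma ((ν + 1) / 2) / (Real.sqrt (π * ν) * Real.Gamma (ν / 2)) with hCdef
  have hC : 0 < C :=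
    div_pos (Real.Gamma_pos_of_pos (by linarith))
      (mul_pos (Real.sqrt_pos.mpr (by positivity)) (Real.Gamma_pos_of_pos (by linarith)))
  have hpdf : ∀ t : ℝ, tPdf ν t = C * (1 + t ^ 2 / ν) ^ (-((ν + 1) / 2)) := fun t => tPdf_eq t
  have hcontb : Continuous fun t : ℝ => (1 + t ^ 2 / ν) ^ (-((ν + 1) / 2)) :=
    Continuous.rpow_const (by continuity) (fun t => Or.inl (hbase t).ne')
  have hcont : Continuous (tPdf ν) := by
    rw [show tPdf ν = fun t => C * (1 + t ^ 2 / ν) ^ (-((ν + 1) / 2)) from funext hpdf]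
    exact continuous_const.mul hcontb
  have htm : Measurable (tPdf ν) := hcont.measurable
  have htnn : ∀ t, 0 ≤ tPdf ν t := fun t => by
    rw [hpdf]
    positivity
  have If := t_pow_integrable hν1 0 (p := (ν + 1) / 2) (by push_cast; linarith)
  simp only [pow_zero, one_mul] at If
  have I1 := t_pow_integrable hν1 1 (p := (ν + 1) / 2) (by push_cast; linarith)
  have I2 := t_pow_integrable hν1 2 (p := (ν + 1) / 2) (by push_cast; linarith)
  have hnormC : C * ∫ t : ℝ, (1 + t ^ 2 / ν) ^ (-((ν + 1) / 2)) = 1 := by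
    rw [← integral_const_mul, show (fun t : ℝ => C * (1 + t ^ 2 / ν) ^ (-((ν + 1) / 2)))
      = tPdf ν from (funext hpdf).symm]
    exact hnorm
  have i1 : Integrable (fun x => x) (tMeasure ν) := by
    rw [tMeasure, integrable_ofReal_withDensity htm htnn]
    refine (I1.const_mul C).mono' ((hcont.mul continuous_id).aestronglyMeasurable)
      (ae_of_all _ fun t => ?_)
    rw [Real.norm_eq_abs, abs_mul, abs_of_nonneg (htnn t), hpdf, pow_one]
    exact le_of_eq (by ring)
  have i2 : Integrable (fun x => x ^ 2) (tMeasure ν) := by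
    rw [tMeasure, integrable_ofReal_withDensity htm htnn]
    refine (I2.const_mul C).congr (ae_of_all _ fun t => ?_)
    show C * (|t| ^ 2 * (1 + t ^ 2 / ν) ^ (-((ν + 1) / 2))) = tPdf ν t * t ^ 2
    rw [hpdf, sq_abs]
    ring
  have e1 : (∫ x, x ∂(tMeasure ν)) = 0 := by
    rw [tMeasure, integral_ofReal_withDensity htm htnn]
    refine integral_odd_zero _ fun t => ?_
    have : tPdf ν (-t) = tPdf ν t := by simp [tPdf, neg_sq]
    rw [this]; ring
  have e2 : (∫ x, x ^ 2 ∂(tMeasure ν)) = ν / (ν - 2) := by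
    rw [tMeasure, integral_ofReal_withDensity htm htnn]
    have he : (fun t : ℝ => tPdf ν t * t ^ 2)
        = fun t : ℝ => C * (t ^ 2 * (1 + t ^ 2 / ν) ^ (-((ν + 1) / 2))) :=
      funext fun t => by rw [hpdf]; ring
    rw [he, integral_const_mul]
    have key := t_sq_moment hν
    rw [eq_div_iff (by linarith : ν - 2 ≠ 0)]
    have h3 : (ν - 2) * (C * ∫ t : ℝ, t ^ 2 * (1 + t ^ 2 / ν) ^ (-((ν + 1) / 2)))
        = ν * (C * ∫ t : ℝ, (1 + t ^ 2 / ν) ^ (-((ν + 1) / 2))) := by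
      linear_combination C * key
    rw [hnormC, mul_one] at h3
    linarith [h3]
  exact ⟨i1, i2, e1, e2⟩

/-- Variance of `γ̂ = θ̂ₓ β̂ₘ`, where conditional on `x`, `θ̂ₓ ~ N(θₓ, σᵥ²/(x'x))`
independently of `β̂ₘ = βₘ + (σᵤ/(σᵥ√(n-2))) T` with `T ~ t(n-2)` and `n ≥ 5`. -/
theorem stmt16 {Ω : Type*} [MeasurableSpace Ω] (Pr : Measure Ω) [IsProbabilityMeasure Pr]
    {n : ℕ} (hn : 5 ≤ n) (θx βm σu σv xx : ℝ) (hσu : 0 < σu) (hσv : 0 < σv)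
    (hxx : 0 < xx)
    (θhat T : Ω → ℝ)
    (hθ : Measure.map θhat Pr = gaussianReal θx (σv ^ 2 / xx).toNNReal)
    (hT : Measure.map T Pr = tMeasure ((n : ℝ) - 2))
    (hind : IndepFun θhat T Pr) :
    variance
        (fun ω => θhat ω * (βm + σu / (σv * Real.sqrt ((n : ℝ) - 2)) * T ω)) Pr
      = θx ^ 2 * (σu ^ 2 / σv ^ 2) / ((n : ℝ) - 4)
        + βm ^ 2 * σv ^ 2 / xx + (σu ^ 2 / xx) / ((n : ℝ) - 4) := by
  have hn5 : (5:ℝ) ≤ (n:ℝ) := by exact_mod_cast hn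
  set ν : ℝ := (n:ℝ) - 2 with hνdef
  have hν : 2 < ν := by rw [hνdef]; linarith
  have hν0 : (0:ℝ) < ν := by linarith
  set c : ℝ := σu / (σv * Real.sqrt ν) with hcdef
  have hbase : ∀ t : ℝ, (0:ℝ) < 1 + t ^ 2 / ν := fun t => by positivity
  have htpos : ∀ t, 0 < tPdf ν t := fun t => by
    rw [tPdf_eq]
    have h1 : 0 < Real.Gamma ((ν + 1) / 2) := Real.Gamma_pos_of_pos (by linarith)
    have h2 : 0 < Real.sqrt (π * ν) := Real.sqrt_pos.mpr (by positivity)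
    have h3 : 0 < Real.Gamma (ν / 2) := Real.Gamma_pos_of_pos (by linarith)
    have h4 : 0 < (1 + t ^ 2 / ν) ^ (-((ν + 1) / 2)) := Real.rpow_pos_of_pos (hbase t) _
    positivity
  have hcont : Continuous (tPdf ν) := by
    rw [show tPdf ν = fun t => Real.Gamma ((ν + 1) / 2)
        / (Real.sqrt (π * ν) * Real.Gamma (ν / 2)) * (1 + t ^ 2 / ν) ^ (-((ν + 1) / 2)) from
      funext fun t => tPdf_eq t]
    exact continuous_const.mul
      (Continuous.rpow_const (by continuity) (fun t => Or.inl (hbase t).ne'))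
  have htm : Measurable (tPdf ν) := hcont.measurable
  have hTae : AEMeasurable T Pr := by
    by_contra h
    rw [Measure.map_of_not_aemeasurable h] at hT
    have h0 : (volume : Measure ℝ).withDensity (fun t => ENNReal.ofReal (tPdf ν t)) = 0 := by
      rw [← tMeasure, ← hT]
    have h1 := withDensity_eq_zero (htm.ennreal_ofReal.aemeasurable) h0
    obtain ⟨t, ht0⟩ := h1.exists
    have h2 := htpos t
    simp only [Pi.zero_apply, ENNReal.ofReal_eq_zero] at ht0
    linarith
  have hθae : AEMeasurable θhat Pr := by
    by_contra h
    rw [Measure.map_of_not_aemeasurable h] at hθ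
    have h1 : (gaussianReal θx (σv ^ 2 / xx).toNNReal) Set.univ = 1 := measure_univ
    rw [← hθ] at h1
    simp at h1
  have hprobT : IsProbabilityMeasure (tMeasure ν) := by
    rw [← hT]; exact Measure.isProbabilityMeasure_map hTae
  have hnorm : ∫ t : ℝ, tPdf ν t = 1 := by
    have h1 : (tMeasure ν) Set.univ = 1 := measure_univ
    rw [tMeasure, withDensity_apply _ MeasurableSet.univ, Measure.restrict_univ] at h1
    rw [integral_eq_lintegral_of_nonneg_ae (ae_of_all _ fun t => (htpos t).le)
      hcont.aestronglyMeasurable, h1]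
    simp
  obtain ⟨iT1, iT2, eT1, eT2⟩ := tMeasure_props hν hnorm
  have hVpos : 0 < σv ^ 2 / xx := by positivity
  have hvne : (σv ^ 2 / xx).toNNReal ≠ 0 := by
    simp only [ne_eq, Real.toNNReal_eq_zero, not_le]
    exact hVpos
  obtain ⟨iG1, iG2, eG1, eG2⟩ := gaussian_moments (m := θx) hvne
  have hcoe : (((σv ^ 2 / xx).toNNReal : ℝ≥0) : ℝ) = σv ^ 2 / xx := Real.coe_toNNReal _ hVpos.le
  rw [hcoe] at eG2
  -- transfer to Pr
  have hθint : Integrable θhat Pr := by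
    have := (integrable_map_measure aestronglyMeasurable_id hθae).mp (by rw [hθ]; exact iG1)
    simpa [Function.comp_def] using this
  have hθsq : Integrable (fun ω => θhat ω ^ 2) Pr := by
    have := (integrable_map_measure (continuous_pow 2).aestronglyMeasurable hθae).mp
      (by rw [hθ]; exact iG2)
    simpa [Function.comp_def] using this
  have hTint : Integrable T Pr := by
    have := (integrable_map_measure aestronglyMeasurable_id hTae).mp (by rw [hT]; exact iT1)
    simpa [Function.comp_def] using this
  have hTsq : Integrable (fun ω => T ω ^ 2) Pr := by
    have := (integrable_map_measure (continuous_pow 2).aestronglyMeasurable hTae).mp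
      (by rw [hT]; exact iT2)
    simpa [Function.comp_def] using this
  have hθmean : ∫ ω, θhat ω ∂Pr = θx := by
    have h := integral_map (μ := Pr) hθae (f := fun x : ℝ => x) aestronglyMeasurable_id
    rw [hθ] at h
    rw [← h]; exact eG1
  have hθsqmean : ∫ ω, θhat ω ^ 2 ∂Pr = θx ^ 2 + σv ^ 2 / xx := by
    have h := integral_map (μ := Pr) hθae (f := fun x : ℝ => x ^ 2)
      (continuous_pow 2).aestronglyMeasurable
    rw [hθ] at h
    rw [← h]; exact eG2
  have hTmean : ∫ ω, T ω ∂Pr = 0 := by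
    have h := integral_map (μ := Pr) hTae (f := fun x : ℝ => x) aestronglyMeasurable_id
    rw [hT] at h
    rw [← h]; exact eT1
  have hTsqmean : ∫ ω, T ω ^ 2 ∂Pr = ν / (ν - 2) := by
    have h := integral_map (μ := Pr) hTae (f := fun x : ℝ => x ^ 2)
      (continuous_pow 2).aestronglyMeasurable
    rw [hT] at h
    rw [← h]; exact eT2
  -- Y facts
  have hYint : Integrable (fun ω => βm + c * T ω) Pr :=
    (integrable_const βm).add (hTint.const_mul c)
  have hYsq : Integrable (fun ω => (βm + c * T ω) ^ 2) Pr := by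
    have he : (fun ω => (βm + c * T ω) ^ 2)
        = fun ω => βm ^ 2 + (2 * βm * c) * T ω + c ^ 2 * T ω ^ 2 := funext fun ω => by ring
    rw [he]
    exact ((integrable_const _).add (hTint.const_mul _)).add (hTsq.const_mul _)
  have hYmean : ∫ ω, (βm + c * T ω) ∂Pr = βm := by
    rw [integral_add (integrable_const βm) (hTint.const_mul c), integral_const_mul, hTmean]
    simp
  have hYsqmean : ∫ ω, (βm + c * T ω) ^ 2 ∂Pr = βm ^ 2 + c ^ 2 * (ν / (ν - 2)) := by
    have he : (fun ω => (βm + c * T ω) ^ 2)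
        = fun ω => βm ^ 2 + (2 * βm * c) * T ω + c ^ 2 * T ω ^ 2 := funext fun ω => by ring
    have i12 : Integrable (fun ω => βm ^ 2 + (2 * βm * c) * T ω) Pr :=
      (integrable_const _).add (hTint.const_mul _)
    rw [he, integral_add i12 (hTsq.const_mul _),
      integral_add (integrable_const _) (hTint.const_mul _), integral_const_mul,
      integral_const_mul, hTmean, hTsqmean]
    simp
  -- independence
  have hiY : IndepFun θhat (fun ω => βm + c * T ω) Pr := by
    have := hind.comp measurable_id ((measurable_id.const_mul c).const_add βm)
    simpa [Function.comp_def] using this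
  have hiY2 : IndepFun (fun ω => θhat ω ^ 2) (fun ω => (βm + c * T ω) ^ 2) Pr := by
    have := hind.comp (measurable_id.pow_const 2)
      (((measurable_id.const_mul c).const_add βm).pow_const 2)
    simpa [Function.comp_def] using this
  have hθaesm : AEStronglyMeasurable θhat Pr := hθint.aestronglyMeasurable
  have hYaesm : AEStronglyMeasurable (fun ω => βm + c * T ω) Pr := hYint.aestronglyMeasurable
  have hprodsq : Integrable (fun ω => θhat ω ^ 2 * (βm + c * T ω) ^ 2) Pr := by
    have := hiY2.integrable_mul hθsq hYsq
    exact this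
  have hXYaesm : AEStronglyMeasurable (fun ω => θhat ω * (βm + c * T ω)) Pr :=
    hθaesm.mul hYaesm
  have hXYL2 : MemLp (fun ω => θhat ω * (βm + c * T ω)) 2 Pr :=
    (memLp_two_iff_integrable_sq hXYaesm).mpr (by
      refine hprodsq.congr (ae_of_all _ fun ω => ?_)
      ring)
  rw [variance_eq_sub hXYL2]
  have e2' : ∫ ω, ((fun ω => θhat ω * (βm + c * T ω)) ^ 2) ω ∂Pr
      = (θx ^ 2 + σv ^ 2 / xx) * (βm ^ 2 + c ^ 2 * (ν / (ν - 2))) := by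
    have hpt : ((fun ω => θhat ω * (βm + c * T ω)) ^ 2)
        = fun ω => θhat ω ^ 2 * (βm + c * T ω) ^ 2 := funext fun ω => by
      simp [Pi.pow_apply]; ring
    rw [hpt]
    have hm := hiY2.integral_mul_eq_mul_integral hθsq.aestronglyMeasurable hYsq.aestronglyMeasurable
    rw [show ((fun ω => θhat ω ^ 2) * fun ω => (βm + c * T ω) ^ 2)
        = fun ω => θhat ω ^ 2 * (βm + c * T ω) ^ 2 from rfl] at hm
    rw [hm, hθsqmean, hYsqmean]
  have e1' : ∫ ω, θhat ω * (βm + c * T ω) ∂Pr = θx * βm := by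
    have hm := hiY.integral_mul_eq_mul_integral hθaesm hYaesm
    rw [show (θhat * fun ω => βm + c * T ω) = fun ω => θhat ω * (βm + c * T ω) from rfl] at hm
    rw [hm, hθmean, hYmean]
  rw [e2', e1']
  -- final algebra
  have hsq : Real.sqrt ν ^ 2 = ν := Real.sq_sqrt hν0.le
  have hc2 : c ^ 2 = σu ^ 2 / (σv ^ 2 * ν) := by
    rw [hcdef, div_pow, mul_pow, hsq]
  have hν2 : ν - 2 = (n:ℝ) - 4 := by rw [hνdef]; ring
  have hn4 : (0:ℝ) < (n:ℝ) - 4 := by linarith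
  rw [hc2, hν2]
  have hνeq : ν = (n:ℝ) - 2 := hνdef
  rw [hνeq]
  have hn2 : (n:ℝ) - 2 ≠ 0 := by linarith
  field_simp
  ring
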